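/- Fix a, b > 0 with a < b, 0 < x₀ < x₁ < 1, γ > 0, and a convex function Φ : ℝ → ℝ of class C² with Φ'(0) = 0 and lim_{v→−∞} Φ'(v) = −∞. Let 0 < T < ∞ and let D₁, D₂ : [0,T] → ℝ be continuous, differentiable on [0,T), strictly positive on [0,T), with D₁(0), D₂(0) ≥ γ, satisfying D₁'(t) = a² Φ''(u₀(t))/D₁(t)² and D₂'(t) = (a−b)(a Φ''(u₀(t)) − b Φ''(u₁(t)))/D₂(t)², where u₀(t) = a(x₁−x₀)/D₁(t) + (a−b)(1−x₁)/D₂(t) and u₁(t) = (a−b)(1−x₁)/D₂(t). Assume the energy E(t) = a Φ'(u₀(t)) − b Φ'(u₁(t)) satisfies E(t) ≤ E(0) < ∞ for all t ∈ [0,T). Then D₂(T) > 0. -/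
import Mathlib


open MeasureTheory Set Filter

/-- For the δ-source gradient-flow ODE system with `a < b`, if
`Φ'(v) → −∞` as `v → −∞` and the energy `E(t) = aΦ'(u₀(t)) − bΦ'(u₁(t))` is
nonincreasing, then `D₂(T) > 0`. -/
theorem stmt_13
    (a b : ℝ) (ha : 0 < a) (hb : 0 < b) (hab : a < b)
    (x₀ x₁ : ℝ) (hx₀ : 0 < x₀) (hx01 : x₀ < x₁) (hx₁ : x₁ < 1)
    (γ : ℝ) (hγ : 0 < γ)
    (Φ : ℝ → ℝ) (hΦ : ContDiff ℝ 2 Φ) (hconv : ConvexOn ℝ univ Φ)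
    (hΦ'0 : deriv Φ 0 = 0)
    (hΦ'bot : Tendsto (deriv Φ) atBot atBot)
    (T : ℝ) (hT : 0 < T)
    (D₁ D₂ : ℝ → ℝ)
    (hD₁c : ContinuousOn D₁ (Icc 0 T)) (hD₂c : ContinuousOn D₂ (Icc 0 T))
    (hD₁pos : ∀ t ∈ Ico (0:ℝ) T, 0 < D₁ t) (hD₂pos : ∀ t ∈ Ico (0:ℝ) T, 0 < D₂ t)
    (hD₁0 : γ ≤ D₁ 0) (hD₂0 : γ ≤ D₂ 0)
    (u₀ u₁ : ℝ → ℝ)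
    (hu₀ : ∀ t, u₀ t = a * (x₁ - x₀) / D₁ t + (a - b) * (1 - x₁) / D₂ t)
    (hu₁ : ∀ t, u₁ t = (a - b) * (1 - x₁) / D₂ t)
    (hODE₁ : ∀ t ∈ Ico (0:ℝ) T,
      HasDerivWithinAt D₁ (a ^ 2 * iteratedDeriv 2 Φ (u₀ t) / (D₁ t) ^ 2) (Icc 0 T) t)
    (hODE₂ : ∀ t ∈ Ico (0:ℝ) T,
      HasDerivWithinAt D₂
        ((a - b) * (a * iteratedDeriv 2 Φ (u₀ t) - b * iteratedDeriv 2 Φ (u₁ t)) / (D₂ t) ^ 2)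
        (Icc 0 T) t)
    (E : ℝ → ℝ) (hE : ∀ t, E t = a * deriv Φ (u₀ t) - b * deriv Φ (u₁ t))
    (hEdec : ∀ t ∈ Ico (0:ℝ) T, E t ≤ E 0) :
    0 < D₂ T := by
  -- `deriv Φ` is monotone
  have hdiff : ∀ x ∈ (univ : Set ℝ), DifferentiableAt ℝ Φ x := fun x _ =>
    (hΦ.differentiable (by norm_num)).differentiableAt
  have hmono : MonotoneOn (deriv Φ) (univ : Set ℝ) := hconv.monotoneOn_deriv hdiff
  have hmono' : Monotone (deriv Φ) := fun x y hxy =>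
    hmono (mem_univ x) (mem_univ y) hxy
  -- on [0,T), `(a-b) * deriv Φ (u₁ t) ≤ E 0`
  have key : ∀ t ∈ Ico (0:ℝ) T, (a - b) * deriv Φ (u₁ t) ≤ E 0 := by
    intro t ht
    have hu01 : u₁ t ≤ u₀ t := by
      rw [hu₀, hu₁]
      have : 0 ≤ a * (x₁ - x₀) / D₁ t :=
        div_nonneg (by nlinarith) (hD₁pos t ht).le
      linarith
    have h1 : a * deriv Φ (u₁ t) ≤ a * deriv Φ (u₀ t) :=
      mul_le_mul_of_nonneg_left (hmono' hu01) ha.le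
    have := hEdec t ht
    rw [hE t] at this
    nlinarith
  -- choose M with `deriv Φ v < E 0 / (a - b)` for `v ≤ M`
  obtain ⟨M, hM⟩ := eventually_atBot.1 (hΦ'bot.eventually_lt_atBot (E 0 / (a - b)))
  set M' : ℝ := min M (-1) with hM'def
  have hM'neg : M' < 0 := lt_of_le_of_lt (min_le_right _ _) (by norm_num)
  have hMM : M' ≤ M := min_le_left _ _
  have hba : a - b < 0 := by linarith
  -- lower bound for u₁ on [0,T)
  have hu₁lb : ∀ t ∈ Ico (0:ℝ) T, M' < u₁ t := by
    intro t ht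
    by_contra h
    push_neg at h
    have h1 : deriv Φ (u₁ t) < E 0 / (a - b) := hM _ (h.trans hMM)
    have h2 : (a - b) * (E 0 / (a - b)) < (a - b) * deriv Φ (u₁ t) :=
      mul_lt_mul_of_neg_left h1 hba
    rw [mul_div_cancel₀ _ (by linarith : a - b ≠ 0)] at h2
    exact absurd (key t ht) (not_le.2 h2)
  -- hence D₂ is bounded below by a positive constant on [0,T)
  set c : ℝ := (a - b) * (1 - x₁) / M' with hcdef
  have hc : 0 < c := div_pos_of_neg_of_neg (by nlinarith) hM'neg
  have hD₂lb : ∀ t ∈ Ico (0:ℝ) T, c ≤ D₂ t := by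
    intro t ht
    have hd := hD₂pos t ht
    have h1 : M' < (a - b) * (1 - x₁) / D₂ t := by rw [← hu₁ t]; exact hu₁lb t ht
    have h2 : M' * D₂ t < (a - b) * (1 - x₁) := by
      have := mul_lt_mul_of_pos_right h1 hd
      rwa [div_mul_cancel₀ _ hd.ne'] at this
    rw [hcdef, div_le_iff_of_neg hM'neg]
    nlinarith
  -- pass to the limit t → T⁻
  have hcont : ContinuousWithinAt D₂ (Icc 0 T) T := hD₂c T (right_mem_Icc.2 hT.le)
  have hcont' : Tendsto D₂ (nhdsWithin T (Ico 0 T)) (nhds (D₂ T)) :=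
    hcont.mono_left (nhdsWithin_mono _ Ico_subset_Icc_self)
  haveI : (nhdsWithin T (Ico (0:ℝ) T)).NeBot := by
    apply mem_closure_iff_nhdsWithin_neBot.mp
    rw [closure_Ico hT.ne]
    exact right_mem_Icc.2 hT.le
  have : c ≤ D₂ T :=
    ge_of_tendsto hcont' (eventually_mem_nhdsWithin.mono fun t ht => hD₂lb t ht)
  linarith
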